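/- Along the normalized combinatorial Yamabe flow $r_i' = (\lambda - K_i) r_i$, the CRG-functional satisfies $\frac{d}{dt}\lambda(r(t)) = -\|r\|_{\ell^1}^{-1} \sum_{i=1}^N r_i (K_i - \lambda)^2 \leq 0$; hence $\lambda(r(t))$ is non-increasing, and it is strictly decreasing at any time when $K$ is not constant. -/

import Mathlib

theorem stmt9 (N : ℕ) (M : Set (Fin N → ℝ)) (hM : IsOpen M)
    (K : (Fin N → ℝ) → Fin N → ℝ)
    (hSchlaefli : ∀ x ∈ M, HasFDerivAt (fun y => ∑ j, K y j * y j)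
      (∑ i, K x i • (ContinuousLinearMap.proj i : (Fin N → ℝ) →L[ℝ] ℝ)) x)
    (lam : (Fin N → ℝ) → ℝ)
    (hlam : ∀ x, lam x = (∑ j, K x j * x j) / ∑ j, x j)
    (r : ℝ → Fin N → ℝ) (hmem : ∀ s, r s ∈ M) (hpos : ∀ s i, 0 < r s i)
    (hflow : ∀ s i, HasDerivAt (fun u => r u i) ((lam (r s) - K (r s) i) * r s i) s)
    (t : ℝ) :
    HasDerivAt (fun s => lam (r s))
      (-(∑ i, r t i)⁻¹ * ∑ i, r t i * (K (r t) i - lam (r t)) ^ 2) t ∧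
    -(∑ i, r t i)⁻¹ * ∑ i, r t i * (K (r t) i - lam (r t)) ^ 2 ≤ 0 ∧
    ((¬ ∀ i j, K (r t) i = K (r t) j) →
      -(∑ i, r t i)⁻¹ * ∑ i, r t i * (K (r t) i - lam (r t)) ^ 2 < 0) := by
  rcases Nat.eq_zero_or_pos N with hN | hN
  · subst hN
    have h0 : (fun s => lam (r s)) = fun _ => (0 : ℝ) := funext fun s => by simp [hlam]
    have hz : (-(∑ i : Fin 0, r t i)⁻¹ * ∑ i : Fin 0, r t i * (K (r t) i - lam (r t)) ^ 2)
        = 0 := by simp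
    refine ⟨?_, ?_, ?_⟩
    · rw [hz, h0]; exact hasDerivAt_const t 0
    · rw [hz]
    · intro h; exact absurd (fun i j => i.elim0) h
  haveI : NeZero N := ⟨hN.ne'⟩
  have hTpos : ∀ s, 0 < ∑ i, r s i := fun s =>
    Finset.sum_pos (fun i _ => hpos s i) Finset.univ_nonempty
  have hTne : ∀ s, (∑ i, r s i) ≠ 0 := fun s => (hTpos s).ne'
  have hmul : ∀ s, lam (r s) * ∑ i, r s i = ∑ i, K (r s) i * r s i := by
    intro s
    rw [hlam]
    exact div_mul_cancel₀ _ (hTne s)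
  have hzero : ∀ s, ∑ i, (lam (r s) - K (r s) i) * r s i = 0 := by
    intro s
    simp only [sub_mul, Finset.sum_sub_distrib]
    rw [← Finset.mul_sum, hmul s, sub_self]
  have hr : ∀ s, HasDerivAt r (fun i => (lam (r s) - K (r s) i) * r s i) s :=
    fun s => hasDerivAt_pi.2 (fun i => hflow s i)
  have hS' : HasDerivAt (fun u => ∑ j, K (r u) j * r u j)
      (∑ i, K (r t) i * ((lam (r t) - K (r t) i) * r t i)) t := by
    have h := (hSchlaefli (r t) (hmem t)).comp_hasDerivAt t (hr t)
    convert h using 1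
    · rfl
    · rfl
    · rfl
    simp [ContinuousLinearMap.sum_apply]
  have hT' : HasDerivAt (fun u => ∑ j, r u j) 0 t := by
    have h := HasDerivAt.fun_sum (fun i (_ : i ∈ Finset.univ) => hflow t i)
    rwa [hzero t] at h
  have hkey : ∑ i, K (r t) i * ((lam (r t) - K (r t) i) * r t i)
      = -∑ i, r t i * (K (r t) i - lam (r t)) ^ 2 := by
    have h1 : ∑ i, (K (r t) i * ((lam (r t) - K (r t) i) * r t i)
        + r t i * (K (r t) i - lam (r t)) ^ 2)
        = lam (r t) * ∑ i, (lam (r t) - K (r t) i) * r t i := by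
      rw [Finset.mul_sum]
      exact Finset.sum_congr rfl fun i _ => by ring
    rw [hzero t, mul_zero, Finset.sum_add_distrib] at h1
    linarith
  have hderiv : HasDerivAt (fun s => lam (r s))
      (-(∑ i, r t i)⁻¹ * ∑ i, r t i * (K (r t) i - lam (r t)) ^ 2) t := by
    have hdiv := hS'.div hT' (hTne t)
    have heq : (fun s => lam (r s)) = fun s => (∑ j, K (r s) j * r s j) / ∑ j, r s j :=
      funext fun s => by rw [hlam]
    rw [heq]
    have hval : -(∑ i, r t i)⁻¹ * ∑ i, r t i * (K (r t) i - lam (r t)) ^ 2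
        = ((∑ i, K (r t) i * ((lam (r t) - K (r t) i) * r t i)) * ∑ j, r t j
            - (∑ j, K (r t) j * r t j) * 0) / (∑ j, r t j) ^ 2 := by
      rw [hkey]
      have := hTne t
      field_simp
      ring
    rw [hval]
    exact hdiv
  have hQ : 0 ≤ ∑ i, r t i * (K (r t) i - lam (r t)) ^ 2 :=
    Finset.sum_nonneg fun i _ => mul_nonneg (hpos t i).le (sq_nonneg _)
  refine ⟨hderiv, ?_, ?_⟩
  · rw [neg_mul, neg_nonpos]
    exact mul_nonneg (inv_nonneg.2 (hTpos t).le) hQ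
  · intro h
    have hex : ∃ i, K (r t) i ≠ lam (r t) := by
      by_contra hc
      push_neg at hc
      exact h fun i j => (hc i).trans (hc j).symm
    obtain ⟨i, hi⟩ := hex
    have hterm : 0 < r t i * (K (r t) i - lam (r t)) ^ 2 := by
      have hne : K (r t) i - lam (r t) ≠ 0 := sub_ne_zero.mpr hi
      have := hpos t i
      positivity
    have hQpos : 0 < ∑ i, r t i * (K (r t) i - lam (r t)) ^ 2 :=
      Finset.sum_pos' (fun j _ => mul_nonneg (hpos t j).le (sq_nonneg _))
        ⟨i, Finset.mem_univ i, hterm⟩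
    rw [neg_mul, neg_lt_zero]
    exact mul_pos (inv_pos.2 (hTpos t)) hQpos
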